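/- With the estimate sequence φ_k defined by φ_0(x) = f(x_0) + (γ_0/2)‖x-x_0‖² and φ_{k+1}(x) = (1-θ_k)φ_k(x) + θ_k[f(x̄_k) + ∇f(x̄_k)ᵀ(x-x̄_k) + (ℓ/2)‖x-x̄_k‖²], writing φ_k(x) = φ_k* + (γ_k/2)‖x - v_k‖², the minimizer and minimum value satisfy the recurrences: γ_{k+1} = (1-θ_k)γ_k + θ_kℓ, v_{k+1} = [(1-θ_k)γ_k v_k + θ_kℓ x̄_k - θ_k∇f(x̄_k)]/γ_{k+1}, and φ_{k+1}* = (1-θ_k)φ_k* + θ_k f(x̄_k) - (θ_k²/(2γ_{k+1}))‖∇f(x̄_k)‖² + (θ_k(1-θ_k)γ_k/γ_{k+1})(ℓ‖x̄_k - v_k‖²/2 + ∇f(x̄_k)ᵀ(v_k - x̄_k)). -/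

import Mathlib

open RealInnerProductSpace

theorem stmt_6 (n : ℕ) (f : EuclideanSpace ℝ (Fin n) → ℝ)
    (g : EuclideanSpace ℝ (Fin n) → EuclideanSpace ℝ (Fin n))
    (hgrad : ∀ x, HasGradientAt f (g x) x)
    (ℓ : ℝ) (hℓ : 0 ≤ ℓ)
    (θ : ℕ → ℝ) (hθ : ∀ k, 0 < θ k ∧ θ k < 1)
    (xbar : ℕ → EuclideanSpace ℝ (Fin n))
    (γ : ℕ → ℝ) (v : ℕ → EuclideanSpace ℝ (Fin n)) (φstar : ℕ → ℝ)
    (φ : ℕ → EuclideanSpace ℝ (Fin n) → ℝ)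
    (hγpos : ∀ k, 0 < γ k)
    (hγrec : ∀ k, γ (k + 1) = (1 - θ k) * γ k + θ k * ℓ)
    (hφrec : ∀ k x, φ (k + 1) x = (1 - θ k) * φ k x +
      θ k * (f (xbar k) + ⟪g (xbar k), x - xbar k⟫ + ℓ / 2 * ‖x - xbar k‖ ^ 2))
    (hrep : ∀ k x, φ k x = φstar k + γ k / 2 * ‖x - v k‖ ^ 2) :
    ∀ k, v (k + 1) = (γ (k + 1))⁻¹ •
        (((1 - θ k) * γ k) • v k + (θ k * ℓ) • xbar k - (θ k) • g (xbar k)) ∧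
      φstar (k + 1) = (1 - θ k) * φstar k + θ k * f (xbar k)
        - (θ k) ^ 2 / (2 * γ (k + 1)) * ‖g (xbar k)‖ ^ 2
        + (θ k * (1 - θ k) * γ k / γ (k + 1)) *
            (ℓ * ‖xbar k - v k‖ ^ 2 / 2 + ⟪g (xbar k), v k - xbar k⟫) := by
  intro k
  have hγ' : 0 < γ (k + 1) := hγpos (k + 1)
  have hγne : γ (k + 1) ≠ 0 := ne_of_gt hγ'
  have hγ'' := hγrec k
  have H : ∀ x : EuclideanSpace ℝ (Fin n),
      φstar (k+1) + γ (k+1)/2 * (‖x‖^2 - 2*⟪x, v (k+1)⟫ + ‖v (k+1)‖^2)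
      = (1 - θ k) * (φstar k + γ k/2 * (‖x‖^2 - 2*⟪x, v k⟫ + ‖v k‖^2))
        + θ k * (f (xbar k) + (⟪g (xbar k), x⟫ - ⟪g (xbar k), xbar k⟫)
          + ℓ/2 * (‖x‖^2 - 2*⟪x, xbar k⟫ + ‖xbar k‖^2)) := by
    intro x
    have h := hφrec k x
    rw [hrep (k+1) x, hrep k x, norm_sub_sq_real, norm_sub_sq_real, norm_sub_sq_real,
      inner_sub_right] at h
    exact h
  have h0 := H 0
  simp only [norm_zero, inner_zero_left, inner_zero_right, ne_eq, OfNat.ofNat_ne_zero,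
    not_false_eq_true, zero_pow, mul_zero, zero_sub, zero_add, sub_zero, neg_zero] at h0
  set B := ((1 - θ k) * γ k) • v k + (θ k * ℓ) • xbar k - (θ k) • g (xbar k) with hB
  have hD : (γ (k+1)) • v (k+1) = B := by
    have key : ∀ x : EuclideanSpace ℝ (Fin n), ⟪x, (γ (k+1)) • v (k+1) - B⟫ = 0 := by
      intro x
      have h1 := H x
      have hexp : ⟪x, (γ (k+1)) • v (k+1) - B⟫
          = γ (k+1) * ⟪x, v (k+1)⟫ - ((1 - θ k) * γ k * ⟪x, v k⟫
            + θ k * ℓ * ⟪x, xbar k⟫ - θ k * ⟪x, g (xbar k)⟫) := by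
        simp only [hB, inner_sub_right, inner_add_right, real_inner_smul_right]
      rw [hexp]
      have hc : ⟪g (xbar k), x⟫ = ⟪x, g (xbar k)⟫ := real_inner_comm _ _
      linear_combination h0 - h1 + (‖x‖^2/2) * hγ'' - θ k * hc
    have h2 := key ((γ (k+1)) • v (k+1) - B)
    rw [real_inner_self_eq_norm_sq] at h2
    have := pow_eq_zero_iff (n := 2) (by norm_num) |>.mp h2
    have h3 : (γ (k+1)) • v (k+1) - B = 0 := by
      exact norm_eq_zero.mp this
    exact sub_eq_zero.mp h3
  constructor
  · rw [← hD, smul_smul, inv_mul_cancel₀ hγne, one_smul]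
  · have hc1 : ⟪v k, xbar k⟫ = ⟪xbar k, v k⟫ := real_inner_comm _ _
    have hc2 : ⟪v k, g (xbar k)⟫ = ⟪g (xbar k), v k⟫ := real_inner_comm _ _
    have hc3 : ⟪xbar k, g (xbar k)⟫ = ⟪g (xbar k), xbar k⟫ := real_inner_comm _ _
    have hnorm : γ (k+1)^2 * ‖v (k+1)‖^2 =
        ((1-θ k)*γ k)^2 * ‖v k‖^2 + (θ k*ℓ)^2 * ‖xbar k‖^2 + (θ k)^2 * ‖g (xbar k)‖^2
        + 2*((1-θ k)*γ k)*(θ k*ℓ) * ⟪xbar k, v k⟫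
        - 2*((1-θ k)*γ k)*(θ k) * ⟪g (xbar k), v k⟫
        - 2*(θ k*ℓ)*(θ k) * ⟪g (xbar k), xbar k⟫ := by
      have h4 : ⟪γ (k+1) • v (k+1), γ (k+1) • v (k+1)⟫ = ⟪B, B⟫ := by rw [hD]
      simp only [hB, inner_sub_left, inner_sub_right, inner_add_left, inner_add_right,
        real_inner_smul_left, real_inner_smul_right] at h4
      simp only [real_inner_self_eq_norm_sq] at h4
      linear_combination h4 + ((1-θ k)*γ k*(θ k*ℓ)) * hc1 - ((1-θ k)*γ k*(θ k)) * hc2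
        - ((θ k*ℓ)*(θ k)) * hc3
    rw [norm_sub_sq_real, inner_sub_right]
    rw [hγ''] at h0 hnorm hγne ⊢
    set p := ⟪(xbar k : EuclideanSpace ℝ (Fin n)), v k⟫ with hp
    set q := ⟪(g (xbar k) : EuclideanSpace ℝ (Fin n)), v k⟫ with hq
    set r := ⟪(g (xbar k) : EuclideanSpace ℝ (Fin n)), xbar k⟫ with hr
    set a := ‖(v k : EuclideanSpace ℝ (Fin n))‖^2 with ha
    set b := ‖(xbar k : EuclideanSpace ℝ (Fin n))‖^2 with hb2
    set c := ‖(g (xbar k) : EuclideanSpace ℝ (Fin n))‖^2 with hcc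
    set V := ‖(v (k+1) : EuclideanSpace ℝ (Fin n))‖^2 with hV
    have key2 : 2*((1 - θ k) * γ k + θ k * ℓ)*φstar (k+1)
        = 2*((1 - θ k) * γ k + θ k * ℓ)*((1-θ k)*φstar k + θ k * f (xbar k))
          - (θ k)^2 * ‖g (xbar k)‖^2
          + 2*(θ k*(1-θ k)*γ k)*(ℓ*(‖xbar k‖^2 - 2*⟪xbar k, v k⟫ + ‖v k‖^2)/2
            + (⟪g (xbar k), v k⟫ - ⟪g (xbar k), xbar k⟫)) := by
      linear_combination (2*((1 - θ k) * γ k + θ k * ℓ))*h0 - hnorm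
    have hG2 : (2*((1 - θ k) * γ k + θ k * ℓ)) ≠ 0 := mul_ne_zero two_ne_zero hγne
    apply mul_left_cancel₀ hG2
    rw [key2]
    field_simp
    ring
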